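/- For every n ≥ 1 and every r > 0 there exist ε₀ > 0 and C > 0 with the following property: for every symmetric Y ∈ ℝ^{n×n} with |Y| ≤ r and every ε ∈ (0, ε₀], one has det(Id + εY) > 0, the matrix (det(Id + εY))^{−1/n} (Id + εY) is symmetric positive definite with determinant 1, and the unique symmetric trace-free matrix Z with exp(Z) = (det(Id + εY))^{−1/n} (Id + εY) satisfies |Z − ε Y_dev| ≤ C ε². -/

import Mathlib

open MeasureTheory Filter Matrix

noncomputable def frobSq {n : ℕ} (X : Matrix (Fin n) (Fin n) ℝ) : ℝ := ∑ i, ∑ j, (X i j)^2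
noncomputable def frob {n : ℕ} (X : Matrix (Fin n) (Fin n) ℝ) : ℝ := Real.sqrt (frobSq X)
noncomputable def msym {n : ℕ} (X : Matrix (Fin n) (Fin n) ℝ) : Matrix (Fin n) (Fin n) ℝ :=
  (1/2 : ℝ) • (X + Xᵀ)
noncomputable def mdev {n : ℕ} (X : Matrix (Fin n) (Fin n) ℝ) : Matrix (Fin n) (Fin n) ℝ :=
  X - (X.trace / n) • (1 : Matrix (Fin n) (Fin n) ℝ)
noncomputable def mils {n : ℕ} (X : Matrix (Fin n) (Fin n) ℝ) : Matrix (Fin n) (Fin n) ℝ :=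
  msym X - (X.trace / n) • (1 : Matrix (Fin n) (Fin n) ℝ)

/-- Matrix exponential, defined by its power series. -/
noncomputable def mexp {n : ℕ} (A : Matrix (Fin n) (Fin n) ℝ) : Matrix (Fin n) (Fin n) ℝ :=
  ∑' k : ℕ, ((k.factorial : ℝ)⁻¹) • A ^ k

/-- The eigenvalues of a symmetric real matrix, listed in ascending order
(and junk value `0` if the matrix is not symmetric). -/
noncomputable def sortedEig {n : ℕ} (A : Matrix (Fin n) (Fin n) ℝ) : Fin n → ℝ :=
  if hA : A.IsHermitian then fun i => hA.eigenvalues (Tuple.sort hA.eigenvalues i) else 0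

/-- The singular values of a real square matrix in ascending order. -/
noncomputable def singVals {n : ℕ} (X : Matrix (Fin n) (Fin n) ℝ) : Fin n → ℝ :=
  fun i => Real.sqrt (sortedEig (Xᵀ * X) i)

/-- The Jacobian matrix of a map `ℝ^n → ℝ^n`. -/
noncomputable def jac {n : ℕ} (u : EuclideanSpace ℝ (Fin n) → EuclideanSpace ℝ (Fin n))
    (x : EuclideanSpace ℝ (Fin n)) : Matrix (Fin n) (Fin n) ℝ :=
  fun i j => fderiv ℝ u x (EuclideanSpace.single j 1) i

section Stmt16Aux

open NormedSpace

variable {n : ℕ}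

lemma stmt16_herm_of_symm {X : Matrix (Fin n) (Fin n) ℝ} (h : Xᵀ = X) : X.IsHermitian := by
  rwa [Matrix.IsHermitian, conjTranspose_eq_transpose_of_trivial]

lemma stmt16_frobSq_eq_trace (X : Matrix (Fin n) (Fin n) ℝ) : frobSq X = (Xᵀ * X).trace := by
  simp only [frobSq, Matrix.trace, Matrix.diag, Matrix.mul_apply, Matrix.transpose_apply, sq]
  exact Finset.sum_comm

variable {U : Matrix (Fin n) (Fin n) ℝ} (hU : U ∈ unitary (Matrix (Fin n) (Fin n) ℝ))
include hU

lemma stmt16_conj_trace (d : Fin n → ℝ) :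
    (U * diagonal d * star U).trace = ∑ i, d i := by
  rw [Matrix.trace_mul_cycle]
  rw [Unitary.star_mul_self_of_mem hU, Matrix.one_mul, Matrix.trace_diagonal]

lemma stmt16_conj_det (d : Fin n → ℝ) :
    (U * diagonal d * star U).det = ∏ i, d i := by
  rw [Matrix.det_mul, Matrix.det_mul, mul_comm, ← mul_assoc, ← Matrix.det_mul,
    Unitary.star_mul_self_of_mem hU]
  simp

omit hU in
lemma stmt16_conj_star (d : Fin n → ℝ) :
    star (U * diagonal d * star U) = U * diagonal d * star U := by
  calc star (U * diagonal d * star U)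
      = star (star U) * (star (diagonal d) * star U) := by
        rw [StarMul.star_mul, StarMul.star_mul]
    _ = U * diagonal d * star U := by
        rw [star_star, Matrix.star_eq_conjTranspose (diagonal d), Matrix.diagonal_conjTranspose,
          ← Matrix.mul_assoc]
        norm_num [Pi.star_def]

lemma stmt16_conj_mul (a b : Fin n → ℝ) :
    (U * diagonal a * star U) * (U * diagonal b * star U) = U * diagonal (a * b) * star U := by
  have h1 : star U * U = 1 := Unitary.star_mul_self_of_mem hU
  calc (U * diagonal a * star U) * (U * diagonal b * star U)
      = U * (diagonal a * ((star U * U) * diagonal b)) * star U := by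
        simp only [Matrix.mul_assoc]
    _ = U * diagonal (a * b) * star U := by
        rw [h1, Matrix.one_mul, Matrix.diagonal_mul_diagonal]
        rfl

lemma stmt16_conj_frobSq (d : Fin n → ℝ) :
    frobSq (U * diagonal d * star U) = ∑ i, d i ^ 2 := by
  rw [stmt16_frobSq_eq_trace, ← Matrix.conjTranspose_eq_transpose_of_trivial,
    ← Matrix.star_eq_conjTranspose, stmt16_conj_star, stmt16_conj_mul hU, stmt16_conj_trace hU]
  simp [sq]

omit hU in
lemma stmt16_conj_sub (a b : Fin n → ℝ) :
    (U * diagonal a * star U) - (U * diagonal b * star U) = U * diagonal (a - b) * star U := by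
  rw [← Matrix.sub_mul, ← Matrix.mul_sub, Matrix.diagonal_sub]
  rfl

omit hU in
lemma stmt16_conj_smul (c : ℝ) (a : Fin n → ℝ) :
    c • (U * diagonal a * star U) = U * diagonal (c • a) * star U := by
  rw [Matrix.diagonal_smul, ← Matrix.smul_mul, ← Matrix.mul_smul]

lemma stmt16_conj_one : U * diagonal (fun _ => (1:ℝ)) * star U = 1 := by
  have : (diagonal (fun _ => (1:ℝ)) : Matrix (Fin n) (Fin n) ℝ) = 1 := by simp
  rw [this, Matrix.mul_one, Unitary.mul_star_self_of_mem hU]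

omit hU in
lemma stmt16_conj_add (a b : Fin n → ℝ) :
    (U * diagonal a * star U) + (U * diagonal b * star U) = U * diagonal (a + b) * star U := by
  rw [← Matrix.add_mul, ← Matrix.mul_add, Matrix.diagonal_add]
  rfl

omit hU in
lemma stmt16_abs_log_sub {x : ℝ} (hx : -(1/2) ≤ x) : |Real.log (1+x) - x| ≤ 2 * x^2 := by
  have hp : (0:ℝ) < 1 + x := by linarith
  have h1 : Real.log (1+x) ≤ x := by
    have := Real.log_le_sub_one_of_pos hp; linarith
  have h2 : Real.log (1+x)⁻¹ ≤ (1+x)⁻¹ - 1 := Real.log_le_sub_one_of_pos (by positivity)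
  rw [Real.log_inv] at h2
  have h5 : (1+x) * (1+x)⁻¹ = 1 := mul_inv_cancel₀ hp.ne'
  have h6 : x - 2*x^2 ≤ 1 - (1+x)⁻¹ := by
    nlinarith [sq_nonneg x, inv_pos.mpr hp,
      mul_nonneg (sq_nonneg x) (by linarith : (0:ℝ) ≤ 1 + 2*x)]
  rw [abs_le]
  constructor <;> nlinarith [sq_nonneg x]

lemma stmt16_conj_posDef (d : Fin n → ℝ) (hd : ∀ i, 0 < d i) :
    (U * diagonal d * star U).PosDef := by
  have hherm : (U * diagonal d * star U).IsHermitian := by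
    rw [Matrix.IsHermitian, ← Matrix.star_eq_conjTranspose]; exact stmt16_conj_star d
  refine Matrix.PosDef.of_dotProduct_mulVec_pos hherm fun x hx => ?_
  set y : Fin n → ℝ := (star U) *ᵥ x with hy_def
  have hy : y ≠ 0 := by
    intro h0
    apply hx
    have : U *ᵥ y = x := by
      rw [hy_def, Matrix.mulVec_mulVec, Unitary.mul_star_self_of_mem hU, Matrix.one_mulVec]
    rw [← this, h0, Matrix.mulVec_zero]
  have hrw : star x ⬝ᵥ (U * diagonal d * star U) *ᵥ x = star y ⬝ᵥ (diagonal d) *ᵥ y := by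
    rw [← Matrix.mulVec_mulVec, ← Matrix.mulVec_mulVec, Matrix.dotProduct_mulVec (star x)]
    congr 1
    rw [hy_def, Matrix.star_mulVec, Matrix.star_eq_conjTranspose U,
      Matrix.conjTranspose_conjTranspose]
  rw [hrw]
  exact (Matrix.PosDef.diagonal hd).dotProduct_mulVec_pos hy

omit hU in
lemma stmt16_exp_inj {W₁ W₂ : Matrix (Fin n) (Fin n) ℝ} (h1 : W₁.IsHermitian)
    (h2 : W₂.IsHermitian) (h : exp W₁ = exp W₂) : W₁ = W₂ := by
  letI : SeminormedRing (Matrix (Fin n) (Fin n) ℝ) := Matrix.instL2OpNormedRing.toSeminormedRing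
  letI : NormedRing (Matrix (Fin n) (Fin n) ℝ) := Matrix.instL2OpNormedRing
  letI : NormedAlgebra ℝ (Matrix (Fin n) (Fin n) ℝ) := Matrix.instL2OpNormedAlgebra
  have e1 := CFC.log_exp W₁ h1
  have e2 := CFC.log_exp W₂ h2
  rw [h, e2] at e1
  exact e1.symm

omit hU in
lemma stmt16_mexp_eq (X : Matrix (Fin n) (Fin n) ℝ) : mexp X = exp X := by
  rw [exp_eq_tsum ℝ]
  rfl

end Stmt16Aux

/-- Expansion of the symmetric trace-free logarithm: for symmetric `Y` with `|Y| ≤ r` and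
small `ε`, `det(Id + εY) > 0`, the unimodular part `(det(Id+εY))^{−1/n}(Id+εY)` is symmetric
positive definite of determinant one, and its unique symmetric trace-free logarithm `Z`
satisfies `|Z − ε Y_dev| ≤ C ε²`. -/
theorem stmt16 (n : ℕ) (hn : 1 ≤ n) (r : ℝ) (hr : 0 < r) :
    ∃ ε₀ > (0 : ℝ), ∃ C > (0 : ℝ), ∀ Y : Matrix (Fin n) (Fin n) ℝ, Yᵀ = Y → frob Y ≤ r →
      ∀ ε : ℝ, 0 < ε → ε ≤ ε₀ →
        0 < (1 + ε • Y).det ∧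
        ((((1 + ε • Y).det ^ (-(1 : ℝ) / n)) • (1 + ε • Y) :
            Matrix (Fin n) (Fin n) ℝ)).PosDef ∧
        ((((1 + ε • Y).det ^ (-(1 : ℝ) / n)) • (1 + ε • Y) :
            Matrix (Fin n) (Fin n) ℝ)).det = 1 ∧
        ∃ Z : Matrix (Fin n) (Fin n) ℝ,
          (Zᵀ = Z ∧ Z.trace = 0 ∧
            mexp Z = ((1 + ε • Y).det ^ (-(1 : ℝ) / n)) • (1 + ε • Y)) ∧
          frob (Z - ε • mdev Y) ≤ C * ε ^ 2 ∧
          (∀ Z' : Matrix (Fin n) (Fin n) ℝ, Z'ᵀ = Z' → Z'.trace = 0 →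
            mexp Z' = ((1 + ε • Y).det ^ (-(1 : ℝ) / n)) • (1 + ε • Y) → Z' = Z) := by
  have hn0 : (0:ℝ) < n := by exact_mod_cast hn
  refine ⟨min 1 (1/(2*r)), lt_min one_pos (by positivity), Real.sqrt n * 4 * r^2 + 1,
    by positivity, ?_⟩
  intro Y hYs hYr ε hε hεε₀
  have hY : Y.IsHermitian := stmt16_herm_of_symm hYs
  set U : Matrix (Fin n) (Fin n) ℝ := (hY.eigenvectorUnitary : Matrix (Fin n) (Fin n) ℝ)
    with hU_def
  have hU : U ∈ unitary (Matrix (Fin n) (Fin n) ℝ) := SetLike.coe_mem _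
  set lam : Fin n → ℝ := hY.eigenvalues with hlam_def
  have hspec : Y = U * diagonal lam * star U := by
    have h := hY.spectral_theorem
    simpa [RCLike.ofReal_real_eq_id] using h
  -- eigenvalue bounds
  have hfroY : frobSq Y = ∑ i, lam i ^ 2 := by
    rw [hspec]; exact stmt16_conj_frobSq hU lam
  have hfroY0 : 0 ≤ frobSq Y := by
    rw [hfroY]; positivity
  have hfrosq : frobSq Y ≤ r ^ 2 := by
    calc frobSq Y = (frob Y)^2 := (Real.sq_sqrt hfroY0).symm
      _ ≤ r^2 := by
          apply pow_le_pow_left₀ (Real.sqrt_nonneg _) hYr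
  have hlam_sq : ∀ i, lam i ^ 2 ≤ r ^ 2 := by
    intro i
    have h1 : lam i ^ 2 ≤ ∑ j, lam j ^ 2 :=
      Finset.single_le_sum (fun j _ => sq_nonneg (lam j)) (Finset.mem_univ i)
    rw [← hfroY] at h1
    linarith
  have hlam_abs : ∀ i, |lam i| ≤ r := by
    intro i
    have := Real.sqrt_le_sqrt (hlam_sq i)
    rwa [Real.sqrt_sq_eq_abs, Real.sqrt_sq hr.le] at this
  have hεr : ε * r ≤ 1/2 := by
    have h := le_trans hεε₀ (min_le_right 1 (1/(2*r)))
    calc ε * r ≤ (1/(2*r)) * r := mul_le_mul_of_nonneg_right h hr.le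
      _ = 1/2 := by field_simp
  have hx_abs : ∀ i, |ε * lam i| ≤ 1/2 := by
    intro i
    rw [abs_mul, abs_of_pos hε]
    calc ε * |lam i| ≤ ε * r := mul_le_mul_of_nonneg_left (hlam_abs i) hε.le
      _ ≤ 1/2 := hεr
  have hx_lo : ∀ i, -(1/2) ≤ ε * lam i := fun i => neg_le_of_abs_le (hx_abs i)
  set d : Fin n → ℝ := fun i => 1 + ε * lam i with hd_def
  have hd_pos : ∀ i, 0 < d i := by
    intro i
    have := hx_lo i
    simp only [hd_def]
    linarith
  have hM : (1 : Matrix (Fin n) (Fin n) ℝ) + ε • Y = U * diagonal d * star U := by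
    have h1 : d = (fun _ : Fin n => (1:ℝ)) + ε • lam := by
      funext i; simp [hd_def]
    rw [h1, ← stmt16_conj_add, ← stmt16_conj_smul, stmt16_conj_one hU, ← hspec]
  have hdet1 : (1 + ε • Y).det = ∏ i, d i := by
    rw [hM]; exact stmt16_conj_det hU d
  have hP : 0 < ∏ i, d i := Finset.prod_pos (fun i _ => hd_pos i)
  have hdetpos : 0 < (1 + ε • Y).det := by rw [hdet1]; exact hP
  set c : ℝ := (1 + ε • Y).det ^ (-(1 : ℝ) / n) with hc_def
  have hc_pos : 0 < c := Real.rpow_pos_of_pos hdetpos _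
  have hcP : c ^ n * ∏ i, d i = 1 := by
    have h1 : c ^ n = ((∏ i, d i) ^ (-(1:ℝ)/n)) ^ (n:ℕ) := by rw [hc_def, hdet1]
    have h2 : ((∏ i, d i) ^ (-(1:ℝ)/n)) ^ (n:ℕ) = (∏ i, d i) ^ ((-(1:ℝ)/n) * n) := by
      rw [← Real.rpow_natCast ((∏ i, d i) ^ (-(1:ℝ)/n)) n, ← Real.rpow_mul hP.le]
    have h3 : (-(1:ℝ)/n) * n = -1 := by field_simp
    rw [h1, h2, h3, Real.rpow_neg_one]
    exact inv_mul_cancel₀ hP.ne'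
  have hA : c • ((1 : Matrix (Fin n) (Fin n) ℝ) + ε • Y)
      = U * diagonal (fun i => c * d i) * star U := by
    rw [hM, stmt16_conj_smul]
    congr 1
  have hcd_pos : ∀ i, 0 < c * d i := fun i => mul_pos hc_pos (hd_pos i)
  refine ⟨hdetpos, ?_, ?_, ?_⟩
  · rw [hA]
    exact stmt16_conj_posDef hU _ hcd_pos
  · rw [Matrix.det_smul, hdet1, Fintype.card_fin]
    exact hcP
  -- construct Z
  set ν : Fin n → ℝ := fun i => Real.log (c * d i) with hν_def
  set Z : Matrix (Fin n) (Fin n) ℝ := U * diagonal ν * star U with hZ_def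
  have hZt : Zᵀ = Z := by
    rw [hZ_def, ← Matrix.conjTranspose_eq_transpose_of_trivial,
      ← Matrix.star_eq_conjTranspose]
    exact stmt16_conj_star ν
  have hZtr : Z.trace = 0 := by
    rw [hZ_def, stmt16_conj_trace hU]
    have h1 : ∑ i, ν i = Real.log (∏ i, c * d i) :=
      (Real.log_prod (fun i _ => (hcd_pos i).ne')).symm
    have h2 : (∏ i, c * d i) = c ^ n * ∏ i, d i := by
      rw [Finset.prod_mul_distrib, Finset.prod_const, Finset.card_univ, Fintype.card_fin]
    rw [h1, h2, hcP, Real.log_one]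
  have hZexp : mexp Z = c • (1 + ε • Y) := by
    rw [stmt16_mexp_eq]
    set u : (Matrix (Fin n) (Fin n) ℝ)ˣ :=
      ⟨U, star U, Unitary.mul_star_self_of_mem hU, Unitary.star_mul_self_of_mem hU⟩ with hu_def
    have h1 : Z = (u : Matrix (Fin n) (Fin n) ℝ) * diagonal ν * ((u⁻¹ : (Matrix (Fin n) (Fin n) ℝ)ˣ) : Matrix (Fin n) (Fin n) ℝ) := rfl
    rw [h1, Matrix.exp_units_conj u, Matrix.exp_diagonal]
    have h2 : NormedSpace.exp ν = fun i => c * d i := by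
      funext i
      rw [Pi.coe_exp, ← Real.exp_eq_exp_ℝ, hν_def]
      exact Real.exp_log (hcd_pos i)
    rw [h2, hA]
    rfl
  refine ⟨Z, ⟨hZt, hZtr, hZexp⟩, ?_, ?_⟩
  · -- frobenius bound
    have htr : Y.trace = ∑ i, lam i := by rw [hspec]; exact stmt16_conj_trace hU lam
    set s : ℝ := ∑ i, lam i with hs_def
    have hmdev : ε • mdev Y = U * diagonal (fun i => ε * (lam i - s / n)) * star U := by
      have h2 : mdev Y
          = U * diagonal (lam - (s/(n:ℝ)) • (fun _ : Fin n => (1:ℝ))) * star U := by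
        unfold mdev
        rw [htr, hspec, ← stmt16_conj_one hU, stmt16_conj_smul, stmt16_conj_sub]
      have h3 : ε • (lam - (s/(n:ℝ)) • (fun _ : Fin n => (1:ℝ)))
          = fun i => ε * (lam i - s / (n:ℝ)) := by
        funext i; simp
      rw [h2, stmt16_conj_smul, h3]
    set δ : Fin n → ℝ := fun i => ν i - ε * (lam i - s / n) with hδ_def
    have hZsub : Z - ε • mdev Y = U * diagonal δ * star U := by
      rw [hZ_def, hmdev, stmt16_conj_sub]
      rfl
    set e : Fin n → ℝ := fun i => Real.log (1 + ε * lam i) - ε * lam i with he_def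
    have he_bound : ∀ i, |e i| ≤ 2 * ε^2 * r^2 := by
      intro i
      have h1 := stmt16_abs_log_sub (hx_lo i)
      have h2 : (ε * lam i)^2 ≤ ε^2 * r^2 := by
        rw [mul_pow]
        exact mul_le_mul_of_nonneg_left (hlam_sq i) (sq_nonneg ε)
      calc |e i| ≤ 2 * (ε * lam i)^2 := h1
        _ ≤ 2 * ε^2 * r^2 := by nlinarith
    have hδ_eq : ∀ i, δ i = e i - (∑ j, e j) / n := by
      intro i
      have hlogc : Real.log c = (-(1:ℝ)/n) * ∑ j, Real.log (d j) := by
        rw [hc_def, hdet1, Real.log_rpow hP,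
          Real.log_prod (fun j _ => (hd_pos j).ne')]
      have hν_eq : ν i = Real.log c + Real.log (d i) :=
        Real.log_mul hc_pos.ne' (hd_pos i).ne'
      have hsum_e : ∑ j, e j = (∑ j, Real.log (d j)) - ε * s := by
        rw [hs_def, Finset.mul_sum, ← Finset.sum_sub_distrib]
      simp only [hδ_def, hν_eq, hlogc, he_def, hsum_e, hd_def]
      field_simp
      rw [Finset.sum_sub_distrib, ← Finset.mul_sum, ← hs_def]
      ring
    have hδ_bound : ∀ i, |δ i| ≤ 4 * ε^2 * r^2 := by
      intro i
      rw [hδ_eq i]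
      have h1 : |∑ j, e j| ≤ n * (2 * ε^2 * r^2) := by
        calc |∑ j, e j| ≤ ∑ j, |e j| := Finset.abs_sum_le_sum_abs _ _
          _ ≤ ∑ _j : Fin n, (2 * ε^2 * r^2) := Finset.sum_le_sum (fun j _ => he_bound j)
          _ = n * (2 * ε^2 * r^2) := by
              rw [Finset.sum_const, Finset.card_univ, Fintype.card_fin]; ring
      have h2 : |(∑ j, e j) / n| ≤ 2 * ε^2 * r^2 := by
        rw [abs_div, abs_of_pos hn0, div_le_iff₀ hn0]
        calc |∑ j, e j| ≤ n * (2 * ε^2 * r^2) := h1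
          _ = 2 * ε^2 * r^2 * n := by ring
      calc |e i - (∑ j, e j) / n| ≤ |e i| + |(∑ j, e j) / n| := abs_sub _ _
        _ ≤ 2 * ε^2 * r^2 + 2 * ε^2 * r^2 := add_le_add (he_bound i) h2
        _ = 4 * ε^2 * r^2 := by ring
    have hsum_sq : ∑ i, δ i ^ 2 ≤ n * (4 * ε^2 * r^2)^2 := by
      calc ∑ i, δ i ^ 2 ≤ ∑ _i : Fin n, (4 * ε^2 * r^2)^2 := by
            apply Finset.sum_le_sum
            intro i _
            rw [← sq_abs (δ i)]
            apply pow_le_pow_left₀ (abs_nonneg _) (hδ_bound i)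
        _ = n * (4 * ε^2 * r^2)^2 := by
            rw [Finset.sum_const, Finset.card_univ, Fintype.card_fin]; ring
    have hfrobZ : frob (Z - ε • mdev Y) = Real.sqrt (∑ i, δ i ^ 2) := by
      rw [frob, hZsub, stmt16_conj_frobSq hU]
    rw [hfrobZ]
    have h4 : (0:ℝ) ≤ 4 * ε^2 * r^2 := by positivity
    calc Real.sqrt (∑ i, δ i ^ 2) ≤ Real.sqrt (n * (4 * ε^2 * r^2)^2) :=
          Real.sqrt_le_sqrt hsum_sq
      _ = Real.sqrt n * (4 * ε^2 * r^2) := by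
          rw [Real.sqrt_mul (le_of_lt hn0), Real.sqrt_sq h4]
      _ = (Real.sqrt n * 4 * r^2) * ε^2 := by ring
      _ ≤ (Real.sqrt n * 4 * r^2 + 1) * ε^2 := by nlinarith [sq_nonneg ε, Real.sqrt_nonneg (n:ℝ)]
  · -- uniqueness
    intro Z' hZ't _ hZ'exp
    apply stmt16_exp_inj (stmt16_herm_of_symm hZ't) (stmt16_herm_of_symm hZt)
    rw [← stmt16_mexp_eq, ← stmt16_mexp_eq, hZ'exp, hZexp]
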